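/- Let F be a field with char(F) ≠ 2 and let μ : F² × F² → F² be a nonzero bilinear associative product on F². Then the algebra (F², μ) is isomorphic to one of the following algebras given by their MSCs: As₂¹ = (0,0,0,0; 1,0,0,0), As₂² = (1,0,0,0; 0,0,0,0), As₂³ = (1,0,0,0; 0,1,0,0), As₂⁴ = (1/2,0,0,0; 0,0,1/2,0), or As₂⁵(α₄) = (1/2,0,0,α₄; 0,1/2,1/2,0) for some α₄ ∈ F; i.e. there exist g ∈ GL₂(F) and one of the MSCs B above such that g B = M (g ⊗ g), where M is the MSC of μ. -/

import Mathlib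

open Matrix Kronecker

/-- Reinterpret a `2 × 4` matrix as an MSC in `M_{2×2²}(F)`, the four columns being
indexed by the pairs `(1,1),(1,2),(2,1),(2,2)` in lexicographic order. -/
def toMsc2 {F : Type*} [Field F] (M : Matrix (Fin 2) (Fin 4) F) :
    Matrix (Fin 2) (Fin 2 × Fin 2) F :=
  Matrix.of fun i p => M i ⟨(p.2 : ℕ) + 2 * (p.1 : ℕ), by omega⟩

section Helpers
variable {F : Type*} [Field F]

def colMat (u w : Fin 2 → F) : Matrix (Fin 2) (Fin 2) F :=
  Matrix.of fun i j => ![u i, w i] j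

lemma colMat_isUnit (u w : Fin 2 → F) (h : u 0 * w 1 - u 1 * w 0 ≠ 0) :
    IsUnit (colMat u w) := by
  rw [Matrix.isUnit_iff_isUnit_det, Matrix.det_fin_two, isUnit_iff_ne_zero]
  simp only [colMat, Matrix.of_apply, Matrix.cons_val', Matrix.cons_val_zero, Matrix.cons_val_one, Matrix.head_cons, Matrix.empty_val', Matrix.cons_val_fin_one, Matrix.head_fin_const]
  intro hc; exact h (by linear_combination hc)

lemma decomp2 (x : Fin 2 → F) :
    x = x 0 • (Pi.single 0 1 : Fin 2 → F) + x 1 • (Pi.single 1 1 : Fin 2 → F) := by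
  funext i; fin_cases i <;> simp

lemma span2 (u v : Fin 2 → F) (h : u 0 * v 1 - u 1 * v 0 ≠ 0) (y : Fin 2 → F) :
    ∃ a b : F, y = a • u + b • v := by
  refine ⟨(y 0 * v 1 - y 1 * v 0) / (u 0 * v 1 - u 1 * v 0),
          (u 0 * y 1 - u 1 * y 0) / (u 0 * v 1 - u 1 * v 0), ?_⟩
  funext i; fin_cases i <;> (simp only [Pi.add_apply, Pi.smul_apply, smul_eq_mul, Fin.zero_eta, Fin.mk_one]; rw [div_mul_eq_mul_div, div_mul_eq_mul_div, ← add_div, eq_div_iff h]; ring)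

lemma dep2 (u v : Fin 2 → F) (hu : u ≠ 0) (h : u 0 * v 1 - u 1 * v 0 = 0) :
    ∃ c : F, v = c • u := by
  by_cases h0 : u 0 = 0
  · have h1 : u 1 ≠ 0 := by
      intro h1; apply hu; funext i; fin_cases i <;> simp [h0, h1]
    refine ⟨v 1 / u 1, ?_⟩
    have hv0 : v 0 = 0 := by
      have : u 1 * v 0 = 0 := by linear_combination -h + v 1 * h0
      exact (mul_eq_zero.1 this).resolve_left h1
    funext i; fin_cases i <;> simp [hv0, h0] <;> field_simp
  · refine ⟨v 0 / u 0, ?_⟩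
    funext i; fin_cases i
    · simp; field_simp
    · simp; field_simp; linear_combination h

end Helpers

section Mu
variable {F : Type*} [Field F] (μ : (Fin 2 → F) →ₗ[F] (Fin 2 → F) →ₗ[F] (Fin 2 → F))

lemma mu_expand (x y : Fin 2 → F) :
    μ x y = (x 0 * y 0) • μ (Pi.single 0 1) (Pi.single 0 1)
        + (x 0 * y 1) • μ (Pi.single 0 1) (Pi.single 1 1)
        + (x 1 * y 0) • μ (Pi.single 1 1) (Pi.single 0 1)
        + (x 1 * y 1) • μ (Pi.single 1 1) (Pi.single 1 1) := by
  conv_lhs => rw [decomp2 x, decomp2 y]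
  simp only [map_add, LinearMap.map_smul, LinearMap.add_apply, LinearMap.smul_apply, _root_.map_smul]
  module

lemma bridge (b1 b2 b3 b4 b5 b6 b7 b8 : F) (u w : Fin 2 → F)
    (h00 : μ u u = b1 • u + b5 • w)
    (h01 : μ u w = b2 • u + b6 • w)
    (h10 : μ w u = b3 • u + b7 • w)
    (h11 : μ w w = b4 • u + b8 • w) :
    colMat u w * toMsc2 !![b1,b2,b3,b4; b5,b6,b7,b8] =
      (Matrix.of fun i p => μ (Pi.single p.1 1) (Pi.single p.2 1) i) *
        (colMat u w ⊗ₖ colMat u w) := by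
  have key : ∀ (x y : Fin 2 → F) (i : Fin 2), μ x y i =
      x 0 * y 0 * μ (Pi.single 0 1) (Pi.single 0 1) i
      + x 0 * y 1 * μ (Pi.single 0 1) (Pi.single 1 1) i
      + x 1 * y 0 * μ (Pi.single 1 1) (Pi.single 0 1) i
      + x 1 * y 1 * μ (Pi.single 1 1) (Pi.single 1 1) i := by
    intro x y i
    have := congrFun (mu_expand μ x y) i
    simpa using this
  ext i ⟨p, q⟩
  rw [Matrix.mul_apply]
  erw [Matrix.mul_apply]
  simp only [Fintype.sum_prod_type, Fin.sum_univ_two, toMsc2, colMat, Matrix.of_apply,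
    kroneckerMap_apply, Matrix.cons_val', Matrix.cons_val_zero, Matrix.cons_val_one,
    Matrix.head_cons, Matrix.empty_val', Matrix.cons_val_fin_one, Matrix.head_fin_const]
  have e00 := congrFun h00 i
  have e01 := congrFun h01 i
  have e10 := congrFun h10 i
  have e11 := congrFun h11 i
  simp only [Pi.add_apply, Pi.smul_apply, smul_eq_mul] at e00 e01 e10 e11
  fin_cases p <;> fin_cases q <;> norm_num <;>
    first
      | linear_combination key u u i - e00
      | linear_combination key u w i - e01
      | linear_combination key w u i - e10
      | linear_combination key w w i - e11

end Mu

section Mu2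
variable {F : Type*} [Field F] (μ : (Fin 2 → F) →ₗ[F] (Fin 2 → F) →ₗ[F] (Fin 2 → F))

lemma exists_indep (u : Fin 2 → F) (hu : u ≠ 0) :
    ∃ v : Fin 2 → F, u 0 * v 1 - u 1 * v 0 ≠ 0 := by
  by_cases h1 : u 1 = 0
  · have h0 : u 0 ≠ 0 := by
      intro h0; exact hu (by funext i; fin_cases i <;> simp [h0, h1])
    exact ⟨Pi.single 1 1, by simpa [h1] using h0⟩
  · exact ⟨Pi.single 0 1, by simpa using h1⟩

lemma ext_identity (u v E : Fin 2 → F) (hd : u 0 * v 1 - u 1 * v 0 ≠ 0)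
    (h1 : μ E u = u) (h2 : μ E v = v) (h3 : μ u E = u) (h4 : μ v E = v) :
    ∀ y, μ E y = y ∧ μ y E = y := by
  intro y
  obtain ⟨a, b, rfl⟩ := span2 u v hd y
  constructor <;>
    simp [map_add, _root_.map_smul, LinearMap.add_apply, LinearMap.smul_apply, h1, h2, h3, h4]

lemma lemU (hchar : (2 : F) ≠ 0) (E : Fin 2 → F) (hE : ∀ y, μ E y = y ∧ μ y E = y) :
    ∃ g : Matrix (Fin 2) (Fin 2) F, IsUnit g ∧ ∃ α₄ : F,
      g * toMsc2 !![1/2,0,0,α₄; 0,1/2,1/2,0] =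
        (Matrix.of fun i p => μ (Pi.single p.1 1) (Pi.single p.2 1) i) * (g ⊗ₖ g) := by
  have hE0 : E ≠ 0 := by
    intro h
    have h1 := (hE (Pi.single 0 1)).1
    rw [h] at h1
    simp only [map_zero, LinearMap.zero_apply] at h1
    have := congrFun h1 0
    simp at this
  obtain ⟨v, hd⟩ := exists_indep E hE0
  obtain ⟨γ, δ, hvv⟩ := span2 E v hd (μ v v)
  set z : Fin 2 → F := v - (δ * (2:F)⁻¹) • E with hz
  have hEE : μ E E = E := (hE E).1
  have hEv : μ E v = v := (hE v).1
  have hvE : μ v E = v := (hE v).2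
  have hEz : μ E z = z := (hE z).1
  have hzE : μ z E = z := (hE z).2
  have hzz : μ z z = (γ + δ * δ * (2:F)⁻¹ * (2:F)⁻¹) • E := by
    rw [hz]
    simp only [map_sub, _root_.map_smul, LinearMap.sub_apply, LinearMap.smul_apply]
    rw [hvv, hEv, hvE, hEE]
    match_scalars <;> (field_simp; try ring)
  refine ⟨colMat ((2:F)⁻¹ • E) z, colMat_isUnit _ _ ?_, 2*γ + δ*δ*(2:F)⁻¹, ?_⟩
  · have h2 : (2:F)⁻¹ ≠ 0 := inv_ne_zero hchar
    simp only [hz, Pi.smul_apply, Pi.sub_apply, smul_eq_mul]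
    intro h; apply hd
    have h' : (2:F)⁻¹ * (E 0 * v 1 - E 1 * v 0) = 0 := by ring_nf; ring_nf at h; linear_combination h
    rcases mul_eq_zero.1 h' with h'' | h''
    · exact absurd h'' h2
    · exact h''
  · apply bridge μ _ _ _ _ _ _ _ _ _ _
    · -- μ u u = (1/2) • u + 0 • z
      simp only [_root_.map_smul, LinearMap.smul_apply]
      rw [hEE]
      match_scalars
      · field_simp; ring
      · ring
    · simp only [_root_.map_smul, LinearMap.smul_apply]
      rw [hEz]; module
    · simp only [_root_.map_smul, LinearMap.smul_apply]
      rw [hzE]; module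
    · rw [hzz]
      match_scalars
      · field_simp; ring
      · ring

end Mu2


/-- Every nonzero bilinear associative product `μ` on `F²` (`char F ≠ 2`) is isomorphic
to one of the algebras `As₂¹, As₂², As₂³, As₂⁴, As₂⁵(α₄)` given by their MSCs:
there are `g ∈ GL₂(F)` and a canonical MSC `B` with `g B = M (g ⊗ g)`, where `M`
is the MSC of `μ`. -/
theorem two_dim_associative_classification {F : Type*} [Field F] (hchar : (2 : F) ≠ 0)
    (μ : (Fin 2 → F) →ₗ[F] (Fin 2 → F) →ₗ[F] (Fin 2 → F)) (hμ : μ ≠ 0)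
    (hassoc : ∀ x y z : Fin 2 → F, μ (μ x y) z = μ x (μ y z)) :
    let M : Matrix (Fin 2) (Fin 2 × Fin 2) F :=
      Matrix.of fun i p => μ (Pi.single p.1 1) (Pi.single p.2 1) i
    ∃ g : Matrix (Fin 2) (Fin 2) F, IsUnit g ∧
      (g * toMsc2 (F := F) !![0,0,0,0; 1,0,0,0] = M * (g ⊗ₖ g) ∨
       g * toMsc2 (F := F) !![1,0,0,0; 0,0,0,0] = M * (g ⊗ₖ g) ∨
       g * toMsc2 (F := F) !![1,0,0,0; 0,1,0,0] = M * (g ⊗ₖ g) ∨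
       g * toMsc2 (F := F) !![1/2,0,0,0; 0,0,1/2,0] = M * (g ⊗ₖ g) ∨
       ∃ α₄ : F, g * toMsc2 (F := F) !![1/2,0,0,α₄; 0,1/2,1/2,0] = M * (g ⊗ₖ g)) := by
  intro M
  by_cases hA : ∃ x : Fin 2 → F, x 0 * (μ x x) 1 - x 1 * (μ x x) 0 ≠ 0
  · obtain ⟨x, hd⟩ := hA
    obtain ⟨α, β, ht⟩ := span2 x (μ x x) hd (μ x (μ x x))
    have hsx : μ (μ x x) x = μ x (μ x x) := hassoc x x x
    have hss : μ (μ x x) (μ x x) = α • (μ x x) + β • (μ x (μ x x)) := by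
      rw [hassoc x x (μ x x)]
      conv_lhs => rw [ht]
      rw [map_add, _root_.map_smul, _root_.map_smul]
    by_cases hα : α = 0
    · by_cases hβ : β = 0
      · -- As₂¹
        rw [hα, hβ] at ht hss
        refine ⟨colMat x (μ x x), colMat_isUnit _ _ hd, Or.inl ?_⟩
        apply bridge μ 0 0 0 0 1 0 0 0 x (μ x x)
        · module
        · rw [ht]; try module
        · rw [hsx, ht]; try module
        · rw [hss, ht]; try module
      · -- As₂²  (α = 0, β ≠ 0)
        have h1 : μ x (μ x x) = β • (μ x x) := by rw [ht, hα]; module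
        have h2 : μ (μ x x) x = β • (μ x x) := by rw [hsx, h1]
        have h3 : μ (μ x x) (μ x x) = (β * β) • (μ x x) := by
          rw [hss, hα, h1]; module
        refine ⟨colMat ((β*β)⁻¹ • μ x x) (x - β⁻¹ • μ x x),
          colMat_isUnit _ _ ?_, Or.inr (Or.inl ?_)⟩
        · simp only [Pi.smul_apply, Pi.sub_apply, smul_eq_mul]
          intro h; apply hd
          field_simp at h
          have h2 : β * (x 0 * (μ x) x 1 - x 1 * (μ x) x 0) = 0 := by linear_combination -h
          rcases mul_eq_zero.1 h2 with h'' | h''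
          · exact absurd h'' hβ
          · exact h''
        · apply bridge μ 1 0 0 0 0 0 0 0 _ _
          · simp only [_root_.map_smul, LinearMap.smul_apply]
            rw [h3]
            match_scalars <;> field_simp <;> ring
          · simp only [map_sub, _root_.map_smul, LinearMap.smul_apply]
            rw [h2, h3]
            match_scalars <;> field_simp <;> ring
          · simp only [map_sub, _root_.map_smul, LinearMap.sub_apply, LinearMap.smul_apply]
            rw [h1, h3]
            match_scalars <;> field_simp <;> ring
          · simp only [map_sub, _root_.map_smul, LinearMap.sub_apply, LinearMap.smul_apply]
            rw [h1, h2, h3]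
            match_scalars <;> field_simp <;> ring
    · -- α ≠ 0 : unital case
      have hEx : μ ((-(β/α)) • x + α⁻¹ • (μ x x)) x = x := by
        simp only [map_add, _root_.map_smul, LinearMap.add_apply, LinearMap.smul_apply]
        rw [hsx, ht]
        match_scalars <;> field_simp <;> ring
      have hxE : μ x ((-(β/α)) • x + α⁻¹ • (μ x x)) = x := by
        simp only [map_add, _root_.map_smul]
        rw [ht]
        match_scalars <;> field_simp <;> ring
      have hEs : μ ((-(β/α)) • x + α⁻¹ • (μ x x)) (μ x x) = μ x x := by
        simp only [map_add, _root_.map_smul, LinearMap.add_apply, LinearMap.smul_apply]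
        rw [hss, ht]
        match_scalars <;> (field_simp; try ring)
      have hsE : μ (μ x x) ((-(β/α)) • x + α⁻¹ • (μ x x)) = μ x x := by
        simp only [map_add, _root_.map_smul]
        rw [hsx, hss, ht]
        match_scalars <;> (field_simp; try ring)
      have hE := ext_identity μ x (μ x x) _ hd hEx hEs hxE hsE
      obtain ⟨g, hg, α₄, hgeq⟩ := lemU μ hchar _ hE
      exact ⟨g, hg, Or.inr (Or.inr (Or.inr (Or.inr ⟨α₄, hgeq⟩)))⟩
  · push_neg at hA
    by_cases hsq : ∀ x : Fin 2 → F, μ x x = 0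
    · -- contradiction : μ = 0
      exfalso; apply hμ
      have z00 : μ (Pi.single 0 1 : Fin 2 → F) (Pi.single 0 1) = 0 := hsq _
      have z11 : μ (Pi.single 1 1 : Fin 2 → F) (Pi.single 1 1) = 0 := hsq _
      have z01 : μ (Pi.single 0 1 : Fin 2 → F) (Pi.single 1 1) = 0 := by
        set s := μ (Pi.single 0 1 : Fin 2 → F) (Pi.single 1 1) with hs
        have h1 : μ (Pi.single 0 1 : Fin 2 → F) s = 0 := by
          rw [hs, ← hassoc, z00]; simp
        have h2 : μ s (Pi.single 1 1 : Fin 2 → F) = 0 := by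
          rw [hs, hassoc, z11]; simp
        have e1 : s 1 • s = 0 := by
          have : μ (Pi.single 0 1 : Fin 2 → F) s =
              s 0 • μ (Pi.single 0 1 : Fin 2 → F) (Pi.single 0 1) + s 1 • s := by
            conv_lhs => rw [decomp2 s]
            rw [map_add, _root_.map_smul, _root_.map_smul]
          rw [h1, z00] at this
          simpa using this.symm
        have e2 : s 0 • s = 0 := by
          have : μ s (Pi.single 1 1 : Fin 2 → F) =
              s 0 • s + s 1 • μ (Pi.single 1 1 : Fin 2 → F) (Pi.single 1 1) := by
            conv_lhs => rw [decomp2 s]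
            rw [map_add, LinearMap.add_apply, _root_.map_smul, _root_.map_smul,
              LinearMap.smul_apply, LinearMap.smul_apply]
          rw [h2, z11] at this
          simpa using this.symm
        by_contra hs0
        rcases smul_eq_zero.1 e1 with h | h
        · rcases smul_eq_zero.1 e2 with h' | h'
          · exact hs0 (by funext i; fin_cases i <;> simp [h, h'] <;> exact h' )
          · exact hs0 h'
        · exact hs0 h
      have z10 : μ (Pi.single 1 1 : Fin 2 → F) (Pi.single 0 1) = 0 := by
        set s := μ (Pi.single 1 1 : Fin 2 → F) (Pi.single 0 1) with hs
        have h1 : μ (Pi.single 1 1 : Fin 2 → F) s = 0 := by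
          rw [hs, ← hassoc, z11]; simp
        have h2 : μ s (Pi.single 0 1 : Fin 2 → F) = 0 := by
          rw [hs, hassoc, z00]; simp
        have e1 : s 0 • s = 0 := by
          have : μ (Pi.single 1 1 : Fin 2 → F) s =
              s 0 • s + s 1 • μ (Pi.single 1 1 : Fin 2 → F) (Pi.single 1 1) := by
            conv_lhs => rw [decomp2 s]
            rw [map_add, _root_.map_smul, _root_.map_smul]
          rw [h1, z11] at this
          simpa using this.symm
        have e2 : s 1 • s = 0 := by
          have : μ s (Pi.single 0 1 : Fin 2 → F) =
              s 0 • μ (Pi.single 0 1 : Fin 2 → F) (Pi.single 0 1) + s 1 • s := by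
            conv_lhs => rw [decomp2 s]
            rw [map_add, LinearMap.add_apply, _root_.map_smul, _root_.map_smul,
              LinearMap.smul_apply, LinearMap.smul_apply]
          rw [h2, z00] at this
          simpa using this.symm
        by_contra hs0
        rcases smul_eq_zero.1 e1 with h | h
        · rcases smul_eq_zero.1 e2 with h' | h'
          · exact hs0 (by funext i; fin_cases i <;> simp [h, h'])
          · exact hs0 h'
        · exact hs0 h
      refine LinearMap.ext fun xx => LinearMap.ext fun yy => ?_
      rw [mu_expand μ xx yy, z00, z01, z10, z11]
      simp
    · push_neg at hsq
      obtain ⟨x, hx⟩ := hsq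
      have hx0 : x ≠ 0 := fun h => hx (by rw [h]; simp)
      obtain ⟨lam, hlam⟩ := dep2 x (μ x x) hx0 (hA x)
      have hlam0 : lam ≠ 0 := fun h => hx (by rw [hlam, h, zero_smul])
      have hu : μ (lam⁻¹ • x) (lam⁻¹ • x) = lam⁻¹ • x := by
        simp only [_root_.map_smul, LinearMap.smul_apply]
        rw [hlam]
        match_scalars; field_simp
      set u : Fin 2 → F := lam⁻¹ • x with hudef
      have hu0 : u ≠ 0 := smul_ne_zero (inv_ne_zero hlam0) hx0
      obtain ⟨v, hd⟩ := exists_indep u hu0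
      have hup : μ u (μ u v) = μ u v := by rw [← hassoc, hu]
      have hpu : μ (μ u v) u = μ u (μ v u) := hassoc u v u
      have hqu : μ (μ v u) u = μ v u := by rw [hassoc, hu]
      have hur : μ u (μ u (μ v u)) = μ u (μ v u) := by rw [← hassoc, hu]
      have hru : μ (μ u (μ v u)) u = μ u (μ v u) := by rw [hassoc, hqu]
      set p : Fin 2 → F := μ u v with hpdef
      set q : Fin 2 → F := μ v u with hqdef
      set r : Fin 2 → F := μ u q with hrdef
      clear_value u p q r
      by_cases hc1 : p - r = 0
      · have hpr : p = r := sub_eq_zero.1 hc1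
        by_cases hc2 : q - r = 0
        · have hqr : q = r := sub_eq_zero.1 hc2
          by_cases hw0 : v - p = 0
          · -- u is an identity
            have hvp : p = v := (sub_eq_zero.1 hw0).symm
            have hvu : μ v u = v := by rw [← hqdef, hqr, ← hpr, hvp]
            have huv : μ u v = v := by rw [← hpdef, hvp]
            have hE := ext_identity μ u v u hd hu huv hu hvu
            obtain ⟨g, hg, α₄, hgeq⟩ := lemU μ hchar _ hE
            exact ⟨g, hg, Or.inr (Or.inr (Or.inr (Or.inr ⟨α₄, hgeq⟩)))⟩
          · -- w := v - p  with uw = wu = 0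
            have huw : μ u (v - p) = 0 := by
              rw [map_sub, ← hpdef, hup, sub_self]
            have hwu : μ (v - p) u = 0 := by
              rw [map_sub, LinearMap.sub_apply, ← hqdef, hpu, hqr, sub_self]
            have hdw : u 0 * (v - p) 1 - u 1 * (v - p) 0 ≠ 0 := by
              intro h
              obtain ⟨c, hc⟩ := dep2 u (v - p) hu0 h
              have h0 : μ u (v - p) = c • u := by
                rw [hc, _root_.map_smul, hu]
              rw [huw] at h0
              rcases smul_eq_zero.1 h0.symm with h' | h'
              · exact hw0 (by rw [hc, h', zero_smul])
              · exact hu0 h'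
            obtain ⟨a, b, hww⟩ := span2 u (v - p) hdw (μ (v - p) (v - p))
            have ha : a = 0 := by
              have h1 : μ u (μ (v - p) (v - p)) = 0 := by
                rw [← hassoc, huw]; simp
              rw [hww, map_add, _root_.map_smul, _root_.map_smul, hu, huw] at h1
              simp only [smul_zero, add_zero] at h1
              rcases smul_eq_zero.1 h1 with h' | h'
              · exact h'
              · exact absurd h' hu0
            rw [ha, zero_smul, zero_add] at hww
            by_cases hb : b = 0
            · -- As₂²
              rw [hb, zero_smul] at hww
              refine ⟨colMat u (v - p), colMat_isUnit _ _ hdw, Or.inr (Or.inl ?_)⟩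
              apply bridge μ 1 0 0 0 0 0 0 0 u (v - p)
              · rw [hu]; module
              · rw [huw]; module
              · rw [hwu]; module
              · rw [hww]; module
            · -- two orthogonal idempotents : unital
              have hee : μ (b⁻¹ • (v - p)) (b⁻¹ • (v - p)) = b⁻¹ • (v - p) := by
                simp only [_root_.map_smul, LinearMap.smul_apply]
                rw [hww, smul_smul, smul_smul, mul_assoc, inv_mul_cancel₀ hb, mul_one]
              have hue : μ u (b⁻¹ • (v - p)) = 0 := by
                rw [_root_.map_smul, huw, smul_zero]
              have heu : μ (b⁻¹ • (v - p)) u = 0 := by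
                rw [_root_.map_smul, LinearMap.smul_apply, hwu, smul_zero]
              have hde : u 0 * (b⁻¹ • (v - p)) 1 - u 1 * (b⁻¹ • (v - p)) 0 ≠ 0 := by
                simp only [Pi.smul_apply, smul_eq_mul]
                intro h; apply hdw
                have h' : b⁻¹ * (u 0 * (v - p) 1 - u 1 * (v - p) 0) = 0 := by
                  linear_combination h
                rcases mul_eq_zero.1 h' with h'' | h''
                · exact absurd h'' (inv_ne_zero hb)
                · exact h''
              have hEu : μ (u + b⁻¹ • (v - p)) u = u := by
                rw [map_add, LinearMap.add_apply, hu, heu, add_zero]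
              have hEe : μ (u + b⁻¹ • (v - p)) (b⁻¹ • (v - p)) = b⁻¹ • (v - p) := by
                rw [map_add, LinearMap.add_apply, hue, hee, zero_add]
              have huE : μ u (u + b⁻¹ • (v - p)) = u := by
                rw [map_add, hu, hue, add_zero]
              have heE : μ (b⁻¹ • (v - p)) (u + b⁻¹ • (v - p)) = b⁻¹ • (v - p) := by
                rw [map_add, heu, hee, zero_add]
              have hE := ext_identity μ u (b⁻¹ • (v - p)) _ hde hEu hEe huE heE
              obtain ⟨g, hg, α₄, hgeq⟩ := lemU μ hchar _ hE
              exact ⟨g, hg, Or.inr (Or.inr (Or.inr (Or.inr ⟨α₄, hgeq⟩)))⟩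
        · -- As₂⁴ : w := q - r, uw = 0, wu = w
          have huw : μ u (q - r) = 0 := by
            rw [map_sub, ← hrdef, hur, sub_self]
          have hwu : μ (q - r) u = q - r := by
            rw [map_sub, LinearMap.sub_apply, hqu, hru]
          have hww : μ (q - r) (q - r) = 0 := by
            have h1 := hassoc (q - r) u (q - r)
            rw [hwu, huw] at h1
            rw [h1]; simp
          have hdw : u 0 * (q - r) 1 - u 1 * (q - r) 0 ≠ 0 := by
            intro h
            obtain ⟨c, hc⟩ := dep2 u (q - r) hu0 h
            have h0 : μ u (q - r) = c • u := by
              rw [hc, _root_.map_smul, hu]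
            rw [huw] at h0
            rcases smul_eq_zero.1 h0.symm with h' | h'
            · exact hc2 (by rw [hc, h', zero_smul])
            · exact hu0 h'
          refine ⟨colMat ((2:F)⁻¹ • u) (q - r), colMat_isUnit _ _ ?_,
            Or.inr (Or.inr (Or.inr (Or.inl ?_)))⟩
          · simp only [Pi.smul_apply, smul_eq_mul]
            intro h; apply hdw
            have h' : (2:F)⁻¹ * (u 0 * (q - r) 1 - u 1 * (q - r) 0) = 0 := by
              linear_combination h
            rcases mul_eq_zero.1 h' with h'' | h''
            · exact absurd h'' (inv_ne_zero hchar)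
            · exact h''
          · apply bridge μ (1/2) 0 0 0 0 0 (1/2) 0 ((2:F)⁻¹ • u) (q - r)
            · simp only [_root_.map_smul, LinearMap.smul_apply]
              rw [hu]; module
            · simp only [_root_.map_smul, LinearMap.smul_apply]
              rw [huw]; module
            · simp only [_root_.map_smul, LinearMap.smul_apply]
              rw [hwu]; module
            · rw [hww]; module
      · -- As₂³ : w := p - r, uw = w, wu = 0
        have huw : μ u (p - r) = p - r := by
          rw [map_sub, hup, hur]
        have hwu : μ (p - r) u = 0 := by
          rw [map_sub, LinearMap.sub_apply, hpu, hru, sub_self]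
        have hww : μ (p - r) (p - r) = 0 := by
          have h1 := hassoc (p - r) u (p - r)
          rw [hwu, huw] at h1
          rw [← h1]; simp
        have hdw : u 0 * (p - r) 1 - u 1 * (p - r) 0 ≠ 0 := by
          intro h
          obtain ⟨c, hc⟩ := dep2 u (p - r) hu0 h
          have h0 : μ (p - r) u = c • u := by
            rw [hc, _root_.map_smul, LinearMap.smul_apply, hu]
          rw [hwu] at h0
          rcases smul_eq_zero.1 h0.symm with h' | h'
          · exact hc1 (by rw [hc, h', zero_smul])
          · exact hu0 h'
        refine ⟨colMat u (p - r), colMat_isUnit _ _ hdw, Or.inr (Or.inr (Or.inl ?_))⟩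
        apply bridge μ 1 0 0 0 0 1 0 0 u (p - r)
        · rw [hu]; module
        · rw [huw]; module
        · rw [hwu]; module
        · rw [hww]; module
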